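/- Let A be a bounded normal operator on a Hilbert space H and g ∈ ran A. Then both closure(K(A,g)) and K(A,g)^⊥ are invariant under A (i.e. A is K(A,g)-reduced) if and only if A*g ∈ closure(K(A,g)). -/

import Mathlib

open ContinuousLinearMap


/-- A bounded normal operator `A` with `g ∈ ran A` is `K(A,g)`-reduced (both
`closure(K(A,g))` and `K(A,g)^⊥` are `A`-invariant) if and only if
`A* g ∈ closure(K(A,g))`. -/
theorem stmt7 {H : Type*} [NormedAddCommGroup H] [InnerProductSpace ℂ H] [CompleteSpace H]
    (A : H →L[ℂ] H)
    (hnormal : A.comp (ContinuousLinearMap.adjoint A) = (ContinuousLinearMap.adjoint A).comp A)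
    (g : H) (hg : g ∈ Set.range A) :
    ((∀ x ∈ closure ((Submodule.span ℂ (Set.range fun k : ℕ => (A ^ k) g)) : Set H),
        A x ∈ closure ((Submodule.span ℂ (Set.range fun k : ℕ => (A ^ k) g)) : Set H))
      ∧ (∀ x ∈ ((Submodule.span ℂ (Set.range fun k : ℕ => (A ^ k) g))ᗮ : Set H),
        A x ∈ ((Submodule.span ℂ (Set.range fun k : ℕ => (A ^ k) g))ᗮ : Set H)))
    ↔ ContinuousLinearMap.adjoint A g
        ∈ closure ((Submodule.span ℂ (Set.range fun k : ℕ => (A ^ k) g)) : Set H) := by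
  set S := Submodule.span ℂ (Set.range fun k : ℕ => (A ^ k) g) with hS
  have hgS : g ∈ S := Submodule.subset_span ⟨0, by simp⟩
  have hmapS : ∀ x ∈ S, A x ∈ S := by
    intro x hx
    induction hx using Submodule.span_induction with
    | mem y hy =>
        obtain ⟨k, rfl⟩ := hy
        exact Submodule.subset_span ⟨k + 1, by simp [pow_succ', mul_apply]⟩
    | zero => simp
    | add y z _ _ hy hz => simpa using S.add_mem hy hz
    | smul c y _ hy => simpa using S.smul_mem c hy
  have hmapC : ∀ x ∈ closure (S : Set H), A x ∈ closure (S : Set H) := by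
    intro x hx
    have := image_closure_subset_closure_image (f := A) A.continuous (Set.mem_image_of_mem A hx)
    exact closure_mono (Set.image_subset_iff.mpr hmapS) this
  have hcomm : ∀ k : ℕ, (adjoint A) ((A ^ k) g) = (A ^ k) ((adjoint A) g) := by
    intro k
    have h : Commute (A ^ k) (adjoint A) := (Commute.pow_left hnormal k)
    calc (adjoint A) ((A ^ k) g) = ((adjoint A) * (A ^ k)) g := rfl
      _ = ((A ^ k) * (adjoint A)) g := by rw [h.eq]
      _ = (A ^ k) ((adjoint A) g) := rfl
  have hpowC : ∀ (k : ℕ) (x : H), x ∈ closure (S : Set H) → (A ^ k) x ∈ closure (S : Set H) := by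
    intro k
    induction k with
    | zero => intro x hx; simpa using hx
    | succ n ih =>
        intro x hx
        have : (A ^ (n + 1)) x = A ((A ^ n) x) := by rw [pow_succ', ContinuousLinearMap.mul_apply]
        rw [this]
        exact hmapC _ (ih x hx)
  have hclos : (closure (S : Set H)) = (S.topologicalClosure : Set H) := rfl
  constructor
  · rintro ⟨h1, h2⟩
    rw [hclos, ← Submodule.orthogonal_orthogonal_eq_closure]
    intro x hx
    have hAx : A x ∈ Sᗮ := h2 x hx
    have : inner ℂ x (adjoint A g) = (0 : ℂ) := by
      rw [adjoint_inner_right]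
      exact (Submodule.mem_orthogonal _ _).mp hAx g hgS |>.symm ▸
        ((Submodule.mem_orthogonal' _ _).mp hAx g hgS)
    exact this
  · intro h
    refine ⟨hmapC, ?_⟩
    intro x hx
    rw [SetLike.mem_coe, Submodule.mem_orthogonal]
    intro v hv
    induction hv using Submodule.span_induction with
    | mem y hy =>
        obtain ⟨k, rfl⟩ := hy
        have h1 : inner ℂ ((A ^ k) g) (A x) = inner ℂ ((adjoint A) ((A ^ k) g)) x :=
          (adjoint_inner_left A _ _).symm
        rw [h1, hcomm k]
        have hmem : (A ^ k) ((adjoint A) g) ∈ closure (S : Set H) := hpowC k _ h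
        -- x ∈ Sᗮ, and closure S ⊆ (Sᗮ)ᗮ... use continuity
        have : ∀ y ∈ closure (S : Set H), inner ℂ y x = (0 : ℂ) := by
          intro y hy
          have hcont : Continuous fun y : H => (inner ℂ y x : ℂ) := continuous_inner.comp (continuous_id.prodMk continuous_const)
          have : (S : Set H) ⊆ {y | (inner ℂ y x : ℂ) = 0} := fun u hu =>
            (Submodule.mem_orthogonal _ _).mp hx u hu
          have hclosed : IsClosed {y | (inner ℂ y x : ℂ) = 0} := isClosed_eq hcont continuous_const
          exact closure_minimal this hclosed hy
        exact this _ hmem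
    | zero => simp
    | add y z _ _ hy hz => simp [inner_add_left, hy, hz]
    | smul c y _ hy => simp [inner_smul_left, hy]
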